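/- arXiv:2311.01796 — 2 statements merged into one kernel-verified Lean document; each statement's English description precedes it below -/
import Mathlib

section
/- Let c be a metric on X, ℓ : X → ℝ an L_c-Lipschitz bounded function, D_O and D_A probability measures on X, and ρ > 0. Then E_{x∼D_O}[ℓ(x)] − sup_{Q : W₁(Q, D_A) ≤ ρ} E_{x∼Q}[ℓ(x)] ≤ L_c · max{W₁(D_O, D_A) − ρ, 0}. -/
open MeasureTheory ENNReal

/-- Wasserstein-1 distance between two measures, defined as the infimum over
couplings (probability measures on `X × X` with the given marginals) of the
expected distance. -/
noncomputable def W1 {X : Type*} [MeasurableSpace X] [PseudoEMetricSpace X]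
    (P Q : Measure X) : ℝ≥0∞ :=
  ⨅ π ∈ {π : Measure (X × X) |
      IsProbabilityMeasure π ∧ π.map Prod.fst = P ∧ π.map Prod.snd = Q},
    ∫⁻ p, edist p.1 p.2 ∂π

section Aux
set_option linter.unusedSectionVars false

lemma aux_ofReal_max (a : ℝ) : ENNReal.ofReal (max a 0) = ENNReal.ofReal a := by
  rcases le_total a 0 with h | h
  · rw [max_eq_right h, ENNReal.ofReal_zero, eq_comm, ENNReal.ofReal_eq_zero]
    exact h
  · rw [max_eq_left h]

/-- If the (unsigned) `lintegral` of `ofReal ∘ g` is at most `b ≠ ⊤`, then the Bochner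
integral of `g` is at most `b.toReal`. -/
lemma aux_integral_le_of_lintegral_le {α : Type*} [MeasurableSpace α] {μ : Measure α}
    {g : α → ℝ} (hg : Integrable g μ) {b : ℝ≥0∞} (hb : b ≠ ⊤)
    (h : ∫⁻ x, ENNReal.ofReal (g x) ∂μ ≤ b) : ∫ x, g x ∂μ ≤ b.toReal := by
  have hpos : Integrable (fun x => max (g x) 0) μ := hg.pos_part
  have h1 : ∫ x, g x ∂μ ≤ ∫ x, max (g x) 0 ∂μ :=
    integral_mono hg hpos fun x => le_max_left _ _
  have h2 : ENNReal.ofReal (∫ x, max (g x) 0 ∂μ) = ∫⁻ x, ENNReal.ofReal (g x) ∂μ := by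
    rw [ofReal_integral_eq_lintegral_ofReal hpos
      (Filter.Eventually.of_forall fun x => le_max_right _ _)]
    exact lintegral_congr fun x => aux_ofReal_max (g x)
  have h3 : 0 ≤ ∫ x, max (g x) 0 ∂μ :=
    integral_nonneg fun x => le_max_right _ _
  have h4 : ∫ x, max (g x) 0 ∂μ ≤ b.toReal := by
    rw [← ENNReal.ofReal_le_iff_le_toReal hb, h2]; exact h
  linarith

variable {X : Type*} [MeasurableSpace X] [MetricSpace X] [BorelSpace X]

omit [MetricSpace X] [BorelSpace X] in
lemma aux_integrable_bounded {X : Type*} [MeasurableSpace X] (ℓ : X → ℝ) (M : ℝ)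
    (hM : ∀ x, |ℓ x| ≤ M)
    {μ : Measure X} [IsFiniteMeasure μ] (hmeas : AEStronglyMeasurable ℓ μ) :
    Integrable ℓ μ := by
  refine (integrable_const M).mono' hmeas ?_
  filter_upwards with x
  simpa [Real.norm_eq_abs] using hM x

lemma aux_integral_le (ℓ : X → ℝ) (M : ℝ) (hM : ∀ x, |ℓ x| ≤ M)
    (Q : Measure X) [IsProbabilityMeasure Q] : ∫ x, ℓ x ∂Q ≤ M := by
  have h := norm_integral_le_of_norm_le_const (μ := Q) (f := ℓ) (C := M)
    (Filter.Eventually.of_forall fun x => by simpa [Real.norm_eq_abs] using hM x)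
  simp only [probReal_univ, mul_one] at h
  calc ∫ x, ℓ x ∂Q ≤ ‖∫ x, ℓ x ∂Q‖ := le_abs_self _
    _ ≤ M := h

/-- Lipschitz coupling bound. -/
lemma aux_coupling_bound (ℓ : X → ℝ) (M Lc : ℝ) (hM : ∀ x, |ℓ x| ≤ M)
    (hmeas : Measurable ℓ) (hLip : ∀ x x', |ℓ x - ℓ x'| ≤ Lc * dist x x')
    (hLc : 0 ≤ Lc)
    (P Q : Measure X) (π : Measure (X × X)) [IsProbabilityMeasure π]
    (hfst : π.map Prod.fst = P) (hsnd : π.map Prod.snd = Q)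
    (hcost : ∫⁻ p, edist p.1 p.2 ∂π ≠ ⊤) :
    (∫ x, ℓ x ∂P) - (∫ x, ℓ x ∂Q) ≤ Lc * (∫⁻ p, edist p.1 p.2 ∂π).toReal := by
  have hi1 : Integrable (fun p : X × X => ℓ p.1) π :=
    aux_integrable_bounded (fun p : X × X => ℓ p.1) M (fun p => hM p.1)
      (hmeas.comp measurable_fst).aestronglyMeasurable
  have hi2 : Integrable (fun p : X × X => ℓ p.2) π :=
    aux_integrable_bounded (fun p : X × X => ℓ p.2) M (fun p => hM p.2)
      (hmeas.comp measurable_snd).aestronglyMeasurable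
  have hP : ∫ x, ℓ x ∂P = ∫ p, ℓ p.1 ∂π := by
    rw [← hfst, integral_map measurable_fst.aemeasurable hmeas.aestronglyMeasurable]
  have hQ : ∫ x, ℓ x ∂Q = ∫ p, ℓ p.2 ∂π := by
    rw [← hsnd, integral_map measurable_snd.aemeasurable hmeas.aestronglyMeasurable]
  have hbound : (ENNReal.ofReal Lc) * (∫⁻ p, edist p.1 p.2 ∂π) ≠ ⊤ :=
    ENNReal.mul_ne_top ofReal_ne_top hcost
  have hlin : ∫⁻ p : X × X, ENNReal.ofReal (ℓ p.1 - ℓ p.2) ∂π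
      ≤ (ENNReal.ofReal Lc) * (∫⁻ p, edist p.1 p.2 ∂π) := by
    rw [← lintegral_const_mul' _ _ ofReal_ne_top]
    refine lintegral_mono fun p => ?_
    rw [edist_dist, ← ENNReal.ofReal_mul hLc]
    exact ENNReal.ofReal_le_ofReal
      ((le_abs_self _).trans (hLip p.1 p.2))
  have := aux_integral_le_of_lintegral_le (hi1.sub hi2) hbound hlin
  rw [hP, hQ, ← integral_sub hi1 hi2]
  refine this.trans ?_
  rw [ENNReal.toReal_mul, ENNReal.toReal_ofReal hLc]

end Aux

/-- For an `L_c`-Lipschitz bounded `ℓ`,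
`E_{D_O}[ℓ] - sup_{W₁(Q, D_A) ≤ ρ} E_Q[ℓ] ≤ L_c · max (W₁(D_O, D_A) - ρ) 0`. -/
theorem stmt10 {X : Type*} [MeasurableSpace X] [MetricSpace X] [BorelSpace X]
    (ℓ : X → ℝ) (M Lc : ℝ) (hM : ∀ x, |ℓ x| ≤ M) (hmeas : Measurable ℓ)
    (hLip : ∀ x x', |ℓ x - ℓ x'| ≤ Lc * dist x x')
    (DO DA : Measure X) [IsProbabilityMeasure DO] [IsProbabilityMeasure DA]
    (hfin : W1 DO DA ≠ ⊤) (ρ : ℝ) (hρ : 0 < ρ) :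
    (∫ x, ℓ x ∂DO)
      - sSup {r | ∃ Q : Measure X, IsProbabilityMeasure Q ∧
          W1 Q DA ≤ ENNReal.ofReal ρ ∧ r = ∫ x, ℓ x ∂Q}
      ≤ Lc * max ((W1 DO DA).toReal - ρ) 0 := by
  set S := {r | ∃ Q : Measure X, IsProbabilityMeasure Q ∧
      W1 Q DA ≤ ENNReal.ofReal ρ ∧ r = ∫ x, ℓ x ∂Q} with hS
  have hbdd : BddAbove S := by
    refine ⟨M, fun r hr => ?_⟩
    obtain ⟨Q, hQ, -, rfl⟩ := hr
    exact aux_integral_le ℓ M hM Q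
  by_cases h1 : W1 DO DA ≤ ENNReal.ofReal ρ
  · -- take Q = DO
    have hmem : (∫ x, ℓ x ∂DO) ∈ S := ⟨DO, inferInstance, h1, rfl⟩
    have hle : (∫ x, ℓ x ∂DO) ≤ sSup S := le_csSup hbdd hmem
    have hmax : max ((W1 DO DA).toReal - ρ) 0 = 0 := by
      rw [max_eq_right]
      have : (W1 DO DA).toReal ≤ ρ := by
        have := ENNReal.toReal_mono ofReal_ne_top h1
        rwa [ENNReal.toReal_ofReal hρ.le] at this
      linarith
    rw [hmax, mul_zero]
    linarith
  · push_neg at h1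
    set w := (W1 DO DA).toReal with hw
    have hwρ : ρ < w :=
      (ENNReal.ofReal_lt_iff_lt_toReal hρ.le hfin).1 h1
    -- Lc ≥ 0
    have hLc : 0 ≤ Lc := by
      by_contra hneg
      push_neg at hneg
      have hdist : ∀ x y : X, dist x y = 0 := by
        intro x y
        by_contra hd
        have hd' : 0 < dist x y := lt_of_le_of_ne dist_nonneg (Ne.symm hd)
        have := hLip x y
        nlinarith [abs_nonneg (ℓ x - ℓ y)]
      have hcoup : (DO.prod DA) ∈ {π : Measure (X × X) |
          IsProbabilityMeasure π ∧ π.map Prod.fst = DO ∧ π.map Prod.snd = DA} := by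
        refine ⟨inferInstance, ?_, ?_⟩
        · rw [Measure.map_fst_prod]; simp
        · rw [Measure.map_snd_prod]; simp
      have h0 : W1 DO DA ≤ ∫⁻ p, edist p.1 p.2 ∂(DO.prod DA) := by
        rw [W1]; exact iInf₂_le _ hcoup
      have hz : (∫⁻ p : X × X, edist p.1 p.2 ∂(DO.prod DA)) = 0 := by
        have he : ∀ p : X × X, edist p.1 p.2 = 0 := fun p => by
          rw [edist_dist, hdist, ENNReal.ofReal_zero]
        simp [he]
      rw [hz] at h0
      have : W1 DO DA = 0 := le_antisymm h0 zero_le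
      rw [this] at h1
      exact (not_lt_of_ge zero_le) h1
    -- main ε-argument
    have key : ∀ ε : ℝ, 0 < ε →
        (∫ x, ℓ x ∂DO) - sSup S ≤ Lc * (w - ρ) + Lc * ε := by
      intro ε hε
      have hlt : W1 DO DA < W1 DO DA + ENNReal.ofReal ε :=
        ENNReal.lt_add_right hfin (ENNReal.ofReal_pos.2 hε).ne'
      have hlt' := hlt
      rw [W1] at hlt'
      obtain ⟨π, hπ⟩ := iInf_lt_iff.1 hlt'
      obtain ⟨⟨hπprob, hfst, hsnd⟩, hπcost⟩ := iInf_lt_iff.1 hπ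
      set C : ℝ≥0∞ := ∫⁻ p, edist p.1 p.2 ∂π with hC
      have hCne : C ≠ ⊤ := ne_top_of_lt hπcost
      have hCge : W1 DO DA ≤ C := by
        rw [W1]; exact iInf₂_le _ ⟨hπprob, hfst, hsnd⟩
      set c := C.toReal with hcdef
      have hcw : w ≤ c := ENNReal.toReal_mono hCne hCge
      have hcρ : ρ < c := lt_of_lt_of_le hwρ hcw
      have hc0 : 0 < c := hρ.trans hcρ
      have hcub : c ≤ w + ε := by
        have := ENNReal.toReal_mono
          (by simp [hfin, ofReal_ne_top] : W1 DO DA + ENNReal.ofReal ε ≠ ⊤) hπcost.le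
        rwa [ENNReal.toReal_add hfin ofReal_ne_top, ENNReal.toReal_ofReal hε.le] at this
      set lam := ρ / c with hlam
      have hlam0 : 0 < lam := div_pos hρ hc0
      have hlam1 : lam < 1 := (div_lt_one hc0).2 hcρ
      have hlamc : lam * c = ρ := div_mul_cancel₀ ρ hc0.ne'
      have hdiagmeas : Measurable (fun x : X => (x, x)) :=
        measurable_id.prodMk measurable_id
      set D : Measure (X × X) := DA.map (fun x => (x, x)) with hD
      set Q : Measure X := ENNReal.ofReal lam • DO + ENNReal.ofReal (1 - lam) • DA
        with hQdef
      set π' : Measure (X × X) := ENNReal.ofReal lam • π + ENNReal.ofReal (1 - lam) • D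
        with hπ'
      have hsum : ENNReal.ofReal lam + ENNReal.ofReal (1 - lam) = 1 := by
        rw [← ENNReal.ofReal_add hlam0.le (by linarith)]
        norm_num
      have hDuniv : D Set.univ = 1 := by
        rw [hD, Measure.map_apply hdiagmeas MeasurableSet.univ]
        simp
      have hQprob : IsProbabilityMeasure Q := by
        constructor
        rw [hQdef]
        simp only [Measure.coe_add, Pi.add_apply, Measure.coe_smul, Pi.smul_apply,
          smul_eq_mul, measure_univ, mul_one]
        exact hsum
      have hπ'prob : IsProbabilityMeasure π' := by
        constructor
        rw [hπ']
        simp only [Measure.coe_add, Pi.add_apply, Measure.coe_smul, Pi.smul_apply,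
          smul_eq_mul, measure_univ, hDuniv, mul_one]
        exact hsum
      have hfstD : D.map Prod.fst = DA := by
        rw [hD, Measure.map_map measurable_fst hdiagmeas]
        exact Measure.map_id
      have hsndD : D.map Prod.snd = DA := by
        rw [hD, Measure.map_map measurable_snd hdiagmeas]
        exact Measure.map_id
      have hfst' : π'.map Prod.fst = Q := by
        rw [hπ', Measure.map_add _ _ measurable_fst, Measure.map_smul,
          Measure.map_smul, hfst, hfstD, hQdef]
      have hsnd' : π'.map Prod.snd = DA := by
        rw [hπ', Measure.map_add _ _ measurable_snd, Measure.map_smul,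
          Measure.map_smul, hsnd, hsndD, ← add_smul, hsum, one_smul]
      have hDcost : ∫⁻ p, edist p.1 p.2 ∂D = 0 := by
        refine le_antisymm ?_ zero_le
        calc ∫⁻ p, edist p.1 p.2 ∂D ≤ ∫⁻ x, edist x x ∂DA :=
              lintegral_map_le (fun p : X × X => edist p.1 p.2) (fun x : X => (x, x))
          _ = 0 := by simp
      have hcost' : ∫⁻ p, edist p.1 p.2 ∂π' ≤ ENNReal.ofReal ρ := by
        rw [hπ', lintegral_add_measure, lintegral_smul_measure, lintegral_smul_measure,
          hDcost, smul_zero, add_zero, ← hC, smul_eq_mul]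
        calc ENNReal.ofReal lam * C = ENNReal.ofReal lam * ENNReal.ofReal c := by
              rw [hcdef, ENNReal.ofReal_toReal hCne]
          _ = ENNReal.ofReal (lam * c) := (ENNReal.ofReal_mul hlam0.le).symm
          _ = ENNReal.ofReal ρ := by rw [hlamc]
          _ ≤ ENNReal.ofReal ρ := le_rfl
      have hW1Q : W1 Q DA ≤ ENNReal.ofReal ρ := by
        refine le_trans ?_ hcost'
        rw [W1]; exact iInf₂_le _ ⟨hπ'prob, hfst', hsnd'⟩
      have hmem : (∫ x, ℓ x ∂Q) ∈ S := ⟨Q, hQprob, hW1Q, rfl⟩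
      have hsup : (∫ x, ℓ x ∂Q) ≤ sSup S := le_csSup hbdd hmem
      have hintDO : Integrable ℓ DO := aux_integrable_bounded ℓ M hM
        hmeas.aestronglyMeasurable
      have hintDA : Integrable ℓ DA := aux_integrable_bounded ℓ M hM
        hmeas.aestronglyMeasurable
      have hQint : ∫ x, ℓ x ∂Q
          = lam * (∫ x, ℓ x ∂DO) + (1 - lam) * (∫ x, ℓ x ∂DA) := by
        rw [hQdef, integral_add_measure (hintDO.smul_measure ofReal_ne_top)
            (hintDA.smul_measure ofReal_ne_top),
          integral_smul_measure, integral_smul_measure,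
          ENNReal.toReal_ofReal hlam0.le, ENNReal.toReal_ofReal (by linarith : (0:ℝ) ≤ 1 - lam)]
        simp [smul_eq_mul]
      have hAB : (∫ x, ℓ x ∂DO) - (∫ x, ℓ x ∂DA) ≤ Lc * c :=
        aux_coupling_bound ℓ M Lc hM hmeas hLip hLc DO DA π hfst hsnd hCne
      have hdiff : (∫ x, ℓ x ∂DO) - (∫ x, ℓ x ∂Q)
          = (1 - lam) * ((∫ x, ℓ x ∂DO) - (∫ x, ℓ x ∂DA)) := by
        rw [hQint]; ring
      have hstep : (∫ x, ℓ x ∂DO) - (∫ x, ℓ x ∂Q) ≤ Lc * (c - ρ) := by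
        rw [hdiff]
        calc (1 - lam) * ((∫ x, ℓ x ∂DO) - (∫ x, ℓ x ∂DA))
            ≤ (1 - lam) * (Lc * c) := by
              apply mul_le_mul_of_nonneg_left hAB (by linarith)
          _ = Lc * (c - lam * c) := by ring
          _ = Lc * (c - ρ) := by rw [hlamc]
      have : (∫ x, ℓ x ∂DO) - sSup S ≤ Lc * (c - ρ) := by linarith
      have hfinal : Lc * (c - ρ) ≤ Lc * (w - ρ) + Lc * ε := by nlinarith
      linarith
    have hmax : max (w - ρ) 0 = w - ρ := max_eq_left (by linarith)
    rw [hmax]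
    refine le_of_forall_pos_le_add fun δ hδ => ?_
    have hkey := key (δ / (Lc + 1)) (div_pos hδ (by linarith))
    have h2 : Lc * (δ / (Lc + 1)) ≤ δ := by
      rw [div_eq_mul_inv, ← mul_assoc]
      rw [mul_inv_le_iff₀ (by linarith : (0:ℝ) < Lc + 1)]
      nlinarith
    linarith
end

section
/- Let c be a metric on X and ℓ : X → ℝ bounded. For a finitely supported empirical measure P̂ = (1/m)∑_{i=1}^m δ_{x_i} and any γ ≥ 0 and ρ ≥ 0, the quantity γρ + (1/m)∑_{i=1}^m φ_γ(x_i), where φ_γ(x) = sup_{x'}(ℓ(x') − γ c(x', x)), is an upper bound on E_{x∼Q}[ℓ(x)] for every probability measure Q with W₁(Q, P̂) ≤ ρ. -/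
open MeasureTheory ENNReal

/-- For the empirical measure `P̂ = (1/m) ∑ δ_{xᵢ}` and any probability measure `Q`
with `W₁(Q, P̂) ≤ ρ`, the quantity `γρ + (1/m) ∑ φ_γ(xᵢ)` upper bounds `E_Q[ℓ]`. -/
theorem stmt19 {X : Type*} [MeasurableSpace X] [MetricSpace X] [BorelSpace X]
    (ℓ : X → ℝ) (M : ℝ) (hM : ∀ x, |ℓ x| ≤ M) (hmeas : Measurable ℓ)
    (m : ℕ) (hm : 0 < m) (x : ℕ → X) (γ ρ : ℝ) (hγ : 0 ≤ γ) (hρ : 0 ≤ ρ)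
    (Q : Measure X) [IsProbabilityMeasure Q]
    (hQ : W1 Q ((m : ℝ≥0∞)⁻¹ • ∑ i ∈ Finset.range m, Measure.dirac (x i))
      ≤ ENNReal.ofReal ρ) :
    ∫ y, ℓ y ∂Q ≤ γ * ρ
      + (1 / m : ℝ) * ∑ i ∈ Finset.range m,
          ⨆ x' : X, (ℓ x' - γ * dist x' (x i)) := by
  have hX : Nonempty X := ⟨x 0⟩
  have hm' : (m : ℝ) ≠ 0 := Nat.cast_ne_zero.mpr hm.ne'
  set Φ : X → ℝ := fun z => ⨆ x' : X, (ℓ x' - γ * dist x' z) with hΦdef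
  -- boundedness of the family defining Φ
  have hbdd : ∀ z : X, BddAbove (Set.range fun x' : X => ℓ x' - γ * dist x' z) := by
    intro z
    refine ⟨M, ?_⟩
    rintro r ⟨x', rfl⟩
    show ℓ x' - γ * dist x' z ≤ M
    have h1 := (abs_le.mp (hM x')).2
    have h2 : 0 ≤ γ * dist x' z := mul_nonneg hγ dist_nonneg
    linarith
  have key : ∀ a b : X, ℓ a ≤ Φ b + γ * dist a b := by
    intro a b
    have h := le_ciSup (hbdd b) a
    linarith
  have hΦge : ∀ z : X, -M ≤ Φ z := by
    intro z
    have h := le_ciSup (hbdd z) z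
    simp only [dist_self, mul_zero, sub_zero] at h
    have := (abs_le.mp (hM z)).1
    linarith
  have hΦle : ∀ z : X, Φ z ≤ M := by
    intro z
    refine ciSup_le fun x' => ?_
    have h1 := (abs_le.mp (hM x')).2
    have h2 : 0 ≤ γ * dist x' z := mul_nonneg hγ dist_nonneg
    linarith
  -- Φ is Lipschitz, hence measurable
  have hΦlip : ∀ z w : X, Φ z ≤ Φ w + γ * dist z w := by
    intro z w
    refine ciSup_le fun x' => ?_
    have ht : dist x' w ≤ dist x' z + dist z w := dist_triangle x' z w
    have h2 : γ * dist x' w ≤ γ * dist x' z + γ * dist z w := by nlinarith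
    have h := le_ciSup (hbdd w) x'
    linarith
  have hmeasΦ : Measurable Φ := by
    have : LipschitzWith (Real.toNNReal γ) Φ := by
      refine LipschitzWith.of_dist_le_mul fun z w => ?_
      rw [Real.dist_eq]
      have hcoe : ((Real.toNNReal γ : NNReal) : ℝ) = γ := Real.coe_toNNReal γ hγ
      rw [hcoe]
      rw [abs_sub_le_iff]
      constructor
      · have := hΦlip z w; linarith
      · have := hΦlip w z; rw [dist_comm w z] at this; linarith
    exact this.continuous.measurable
  -- integrability of ℓ
  have hintℓ : Integrable ℓ Q := by
    refine ⟨hmeas.aestronglyMeasurable, ?_⟩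
    exact HasFiniteIntegral.of_bounded (C := M) (ae_of_all _ fun y => by
      rw [Real.norm_eq_abs]; exact hM y)
  -- the shifted nonnegative function
  set g : X → ℝ := fun y => ℓ y + M with hgdef
  have hg0 : ∀ y, 0 ≤ g y := fun y => by
    have := (abs_le.mp (hM y)).1; simp only [hgdef]; linarith
  have hgmeas : Measurable fun y => ENNReal.ofReal (g y) :=
    ENNReal.measurable_ofReal.comp (hmeas.add measurable_const)
  have hΨmeas : Measurable fun z => ENNReal.ofReal (Φ z + M) :=
    ENNReal.measurable_ofReal.comp (hmeasΦ.add measurable_const)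
  -- ∫ g dQ = toReal of the lintegral
  have hgint : ∫ y, g y ∂Q = (∫⁻ y, ENNReal.ofReal (g y) ∂Q).toReal := by
    exact integral_eq_lintegral_of_nonneg_ae (ae_of_all _ hg0)
      (hmeas.add measurable_const).aestronglyMeasurable
  have hsplitint : ∫ y, g y ∂Q = ∫ y, ℓ y ∂Q + M := by
    simp only [hgdef]
    rw [integral_add hintℓ (integrable_const M), integral_const, probReal_univ]
    simp
  -- main ε-argument
  refine le_of_forall_pos_le_add fun ε hε => ?_
  set δ : ℝ := ε / (γ + 1) with hδdef
  have hδ : 0 < δ := div_pos hε (by linarith)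
  -- obtain a near-optimal coupling
  have hlt : W1 Q ((m : ℝ≥0∞)⁻¹ • ∑ i ∈ Finset.range m, Measure.dirac (x i))
      < ENNReal.ofReal ρ + ENNReal.ofReal δ := by
    refine lt_of_le_of_lt hQ ?_
    exact ENNReal.lt_add_right ENNReal.ofReal_ne_top
      (ne_of_gt (ENNReal.ofReal_pos.mpr hδ))
  rw [W1] at hlt
  simp only [iInf_lt_iff, Set.mem_setOf_eq] at hlt
  obtain ⟨π, ⟨hπp, h1, h2⟩, hπd⟩ := hlt
  -- the chain of inequalities in ℝ≥0∞
  have hA : ∫⁻ y, ENNReal.ofReal (g y) ∂Q = ∫⁻ p, ENNReal.ofReal (g p.1) ∂π := by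
    rw [← h1, lintegral_map hgmeas measurable_fst]
  have hmono : ∫⁻ p, ENNReal.ofReal (g p.1) ∂π
      ≤ ∫⁻ p, (ENNReal.ofReal (Φ p.2 + M) + ENNReal.ofReal γ * edist p.1 p.2) ∂π := by
    refine lintegral_mono fun p => ?_
    have hk := key p.1 p.2
    have hnn1 : 0 ≤ Φ p.2 + M := by have := hΦge p.2; linarith
    have hnn2 : 0 ≤ γ * dist p.1 p.2 := mul_nonneg hγ dist_nonneg
    calc ENNReal.ofReal (g p.1)
        ≤ ENNReal.ofReal ((Φ p.2 + M) + γ * dist p.1 p.2) := by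
          refine ENNReal.ofReal_le_ofReal ?_
          simp only [hgdef]; linarith
      _ = ENNReal.ofReal (Φ p.2 + M) + ENNReal.ofReal γ * edist p.1 p.2 := by
          rw [ENNReal.ofReal_add hnn1 hnn2, ENNReal.ofReal_mul hγ, edist_dist]
  have hsplit : ∫⁻ p, (ENNReal.ofReal (Φ p.2 + M) + ENNReal.ofReal γ * edist p.1 p.2) ∂π
      = ∫⁻ p, ENNReal.ofReal (Φ p.2 + M) ∂π
        + ENNReal.ofReal γ * ∫⁻ p, edist p.1 p.2 ∂π := by
    have hcomp : Measurable fun p : X × X => ENNReal.ofReal (Φ p.2 + M) :=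
      hΨmeas.comp measurable_snd
    rw [lintegral_add_left hcomp,
      lintegral_const_mul' _ _ ENNReal.ofReal_ne_top]
  have hfirst : ∫⁻ p, ENNReal.ofReal (Φ p.2 + M) ∂π
      = (m : ℝ≥0∞)⁻¹ * ∑ i ∈ Finset.range m, ENNReal.ofReal (Φ (x i) + M) := by
    have := lintegral_map (μ := π) hΨmeas measurable_snd
    rw [← this, h2, lintegral_smul_measure, lintegral_finset_sum_measure]
    congr 1
    refine Finset.sum_congr rfl fun i _ => ?_
    exact lintegral_dirac' _ hΨmeas
  -- convert the bound to the reals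
  set C : ℝ := (1 / m : ℝ) * ∑ i ∈ Finset.range m, (Φ (x i) + M) + γ * (ρ + δ) with hCdef
  have hC0 : 0 ≤ (1 / m : ℝ) * ∑ i ∈ Finset.range m, (Φ (x i) + M) := by
    refine mul_nonneg (by positivity) (Finset.sum_nonneg fun i _ => ?_)
    have := hΦge (x i); linarith
  have hBC : (m : ℝ≥0∞)⁻¹ * ∑ i ∈ Finset.range m, ENNReal.ofReal (Φ (x i) + M)
      + ENNReal.ofReal γ * (ENNReal.ofReal ρ + ENNReal.ofReal δ)
      ≤ ENNReal.ofReal C := by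
    have e1 : (m : ℝ≥0∞)⁻¹ * ∑ i ∈ Finset.range m, ENNReal.ofReal (Φ (x i) + M)
        = ENNReal.ofReal ((1 / m : ℝ) * ∑ i ∈ Finset.range m, (Φ (x i) + M)) := by
      rw [ENNReal.ofReal_mul (by positivity),
        ENNReal.ofReal_sum_of_nonneg (fun i _ => by have := hΦge (x i); linarith)]
      congr 1
      rw [one_div, ENNReal.ofReal_inv_of_pos (by exact_mod_cast hm), ENNReal.ofReal_natCast]
    have e2 : ENNReal.ofReal γ * (ENNReal.ofReal ρ + ENNReal.ofReal δ)
        = ENNReal.ofReal (γ * (ρ + δ)) := by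
      rw [ENNReal.ofReal_mul hγ, ENNReal.ofReal_add hρ hδ.le]
    rw [e1, e2, ← ENNReal.ofReal_add hC0 (by positivity)]
  -- assemble
  have hmain : ∫⁻ y, ENNReal.ofReal (g y) ∂Q ≤ ENNReal.ofReal C := by
    calc ∫⁻ y, ENNReal.ofReal (g y) ∂Q
        = ∫⁻ p, ENNReal.ofReal (g p.1) ∂π := hA
      _ ≤ _ := hmono
      _ = _ := hsplit
      _ ≤ (m : ℝ≥0∞)⁻¹ * ∑ i ∈ Finset.range m, ENNReal.ofReal (Φ (x i) + M)
            + ENNReal.ofReal γ * (ENNReal.ofReal ρ + ENNReal.ofReal δ) := by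
          rw [hfirst]
          exact add_le_add_right (mul_le_mul_right hπd.le _) _
      _ ≤ ENNReal.ofReal C := hBC
  have hCpos : 0 ≤ C := by
    have : 0 ≤ γ * (ρ + δ) := by positivity
    simp only [hCdef]; linarith
  have hreal : ∫ y, g y ∂Q ≤ C := by
    rw [hgint]
    exact ENNReal.toReal_le_of_le_ofReal hCpos hmain
  rw [hsplitint] at hreal
  -- final arithmetic
  have hsum : ∑ i ∈ Finset.range m, (Φ (x i) + M)
      = (∑ i ∈ Finset.range m, Φ (x i)) + m * M := by
    rw [Finset.sum_add_distrib, Finset.sum_const, Finset.card_range, nsmul_eq_mul]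
  have hsum2 : (1 / m : ℝ) * ∑ i ∈ Finset.range m, (Φ (x i) + M)
      = (1 / m : ℝ) * (∑ i ∈ Finset.range m, Φ (x i)) + M := by
    rw [hsum, mul_add]
    field_simp
  have hγδ : γ * δ ≤ ε := by
    rw [hδdef]
    rw [mul_div_assoc'] at *
    rw [div_le_iff₀ (by linarith)]
    nlinarith
  simp only [hCdef] at hreal
  rw [hsum2] at hreal
  have : γ * (ρ + δ) = γ * ρ + γ * δ := by ring
  rw [this] at hreal
  linarith
end
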